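/- (ODE asymptotics yielding the double-exponential rate 2/π.) Let h̄ : (0,1) → (0,∞) be continuous with lim_{s→0⁺} h̄(s) = 2/π. Let k : [0,∞) → ℝ be differentiable with exp(−exp(k(t))) ∈ (0,1) for all t ≥ 0 and satisfying k'(t) = h̄( exp(−exp(k(t))) ) for all t ≥ 0. Then lim_{t→∞} k(t)/t = 2/π. In particular, if ε(t) := exp(−exp(k(t))), then lim_{t→∞} ln(−ln ε(t)) / t = 2/π, i.e. ε(t) decays double-exponentially at rate 2/π. -/

import Mathlib

open MeasureTheory Real Filter Set
open scoped ENNReal NNReal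

noncomputable section

abbrev E3 : Type := EuclideanSpace ℝ (Fin 3)

/-- The vector `(a, b, c)` in `ℝ³`. -/
def vec3 (a b c : ℝ) : E3 := (WithLp.equiv 2 (Fin 3 → ℝ)).symm ![a, b, c]

/-- Euclidean dot product in `ℝ³`. -/
def dot3 (x y : E3) : ℝ := x 0 * y 0 + x 1 * y 1 + x 2 * y 2

/-- Cross product in `ℝ³`. -/
def cross3 (x y : E3) : E3 :=
  vec3 (x 1 * y 2 - x 2 * y 1) (x 2 * y 0 - x 0 * y 2) (x 0 * y 1 - x 1 * y 0)

/-- The unit sphere `S²` in `ℝ³`. -/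
def S2 : Set E3 := Metric.sphere (0 : E3) 1

/-- The surface measure on `S²`: the 2-dimensional Hausdorff measure restricted to `S²`. -/
def sigma2 : Measure E3 := (μH[2] : Measure E3).restrict S2

/-- Spherical coordinates. -/
def sc (φ θ : ℝ) : E3 := vec3 (cos θ * cos φ) (cos θ * sin φ) (sin θ)

/-- The Biot–Savart velocity of a vorticity `ω` on the sphere. -/
def biotSavart (ω : E3 → ℝ) (x : E3) : E3 :=
  (2 * Real.pi)⁻¹ • ∫ y, (‖x - y‖ ^ 2)⁻¹ • ω y • cross3 x y ∂sigma2

/-- The unit tangent vector `e_φ`. -/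
def ephi (y : E3) : E3 := vec3 (-(y 1) / sqrt (1 - (y 2) ^ 2)) (y 0 / sqrt (1 - (y 2) ^ 2)) 0

/-- The unit tangent vector `e_θ`. -/
def etheta (y : E3) : E3 :=
  vec3 (-(y 2) * y 0 / sqrt (1 - (y 2) ^ 2)) (-(y 2) * y 1 / sqrt (1 - (y 2) ^ 2))
    (sqrt (1 - (y 2) ^ 2))

/-- Reflection in the second coordinate: `ỹ`. -/
def flip2 (y : E3) : E3 := vec3 (y 0) (-(y 1)) (y 2)

/-- Reflection in the third coordinate: `ȳ`. -/
def flip3 (y : E3) : E3 := vec3 (y 0) (y 1) (-(y 2))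

/-- `ω` is odd-odd symmetric on the sphere. -/
def OddOdd (ω : E3 → ℝ) : Prop := ∀ x ∈ S2, ω (flip2 x) = -ω x ∧ ω (flip3 x) = -ω x

def x₀ : E3 := vec3 1 0 0

/-- The region `Q(k₁, k₂)` on the sphere. -/
def Qset (k₁ k₂ : ℝ) : Set E3 :=
  (fun p : ℝ × ℝ => sc p.1 p.2) '' (Ioo k₁ Real.pi ×ˢ Ioo k₂ (Real.pi / 2))

/-- The open quarter sphere. -/
def S2q : Set E3 := {y ∈ S2 | 0 < y 1 ∧ 0 < y 2}

/-- The (possibly infinite) Lipschitz constant of `f` on the set `s`. -/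
def lipOn (f : ℝ × ℝ → ℝ) (s : Set (ℝ × ℝ)) : ℝ≥0∞ :=
  ⨆ p ∈ s, ⨆ q ∈ s, edist (f p) (f q) / edist p q

/-- ODE asymptotics yielding the double-exponential rate `2/π`. -/
theorem ode_double_exponential_rate (hbar : ℝ → ℝ) (k : ℝ → ℝ)
    (hbar_cont : ContinuousOn hbar (Ioo 0 1))
    (hbar_pos : ∀ s ∈ Ioo (0:ℝ) 1, 0 < hbar s)
    (hbar_lim : Tendsto hbar (nhdsWithin 0 (Ioi 0)) (nhds (2 / Real.pi)))
    (hk_range : ∀ t ≥ (0:ℝ), exp (-exp (k t)) ∈ Ioo (0:ℝ) 1)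
    (hk_deriv : ∀ t ≥ (0:ℝ), HasDerivAt k (hbar (exp (-exp (k t)))) t) :
    Tendsto (fun t => k t / t) atTop (nhds (2 / Real.pi)) ∧
    Tendsto (fun t => log (-log (exp (-exp (k t)))) / t) atTop (nhds (2 / Real.pi)) := by
  set L : ℝ := 2 / Real.pi with hL
  have hcontk : ContinuousOn k (Ici 0) := fun t ht =>
    ((hk_deriv t ht).continuousAt).continuousWithinAt
  have hderiv_eq : ∀ t ∈ interior (Ici (0:ℝ)), deriv k t = hbar (exp (-exp (k t))) := by
    intro t ht
    rw [interior_Ici] at ht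
    exact (hk_deriv t (le_of_lt ht)).deriv
  have hpos : ∀ t ≥ (0:ℝ), 0 < hbar (exp (-exp (k t))) := fun t ht =>
    hbar_pos _ (hk_range t ht)
  have hdiff : DifferentiableOn ℝ k (interior (Ici (0:ℝ))) := by
    rw [interior_Ici]
    exact fun t ht => ((hk_deriv t (le_of_lt ht)).differentiableAt).differentiableWithinAt
  have hmono : ∀ s ∈ Ici (0:ℝ), ∀ t ∈ Ici (0:ℝ), s ≤ t → k s ≤ k t := by
    intro s hs t ht hst
    have h0 := (convex_Ici (0:ℝ)).mul_sub_le_image_sub_of_le_deriv hcontk hdiff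
      (C := 0) (by
        intro x hx
        rw [hderiv_eq x hx]
        rw [interior_Ici] at hx
        exact (hpos x (le_of_lt hx)).le) s hs t ht hst
    linarith
  -- Step 1: k tends to atTop
  have hk_top : Tendsto k atTop atTop := by
    by_contra hc
    rw [tendsto_atTop_atTop] at hc
    push_neg at hc
    obtain ⟨b, hb⟩ := hc
    have hbub : ∀ t ≥ (0:ℝ), k t < b := by
      intro t ht
      obtain ⟨a, hta, hab⟩ := hb t
      exact lt_of_le_of_lt (hmono t ht a (le_trans ht hta) hta) hab
    have hk0b : k 0 < b := hbub 0 le_rfl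
    set e0 : ℝ := exp (-exp b)
    set e1 : ℝ := exp (-exp (k 0))
    have he01 : e0 ≤ e1 := exp_le_exp.2 (by
      simp only [neg_le_neg_iff]
      exact exp_le_exp.2 hk0b.le)
    have hsub : Icc e0 e1 ⊆ Ioo (0:ℝ) 1 := by
      intro x hx
      refine ⟨lt_of_lt_of_le (exp_pos _) hx.1, lt_of_le_of_lt hx.2 ?_⟩
      exact (hk_range 0 le_rfl).2
    obtain ⟨m, hmK, hmin⟩ := isCompact_Icc.exists_isMinOn (s := Icc e0 e1)
      ⟨e0, le_rfl, he01⟩ (hbar_cont.mono hsub)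
    set c : ℝ := hbar m
    have hc0 : 0 < c := hbar_pos m (hsub hmK)
    have hmem : ∀ t ≥ (0:ℝ), exp (-exp (k t)) ∈ Icc e0 e1 := by
      intro t ht
      constructor
      · exact exp_le_exp.2 (by simp only [neg_le_neg_iff]; exact exp_le_exp.2 (hbub t ht).le)
      · exact exp_le_exp.2 (by simp only [neg_le_neg_iff]; exact exp_le_exp.2 (hmono 0 Set.self_mem_Ici t ht ht))
    have hge : ∀ t ≥ (0:ℝ), c ≤ hbar (exp (-exp (k t))) := fun t ht => hmin (hmem t ht)
    have hdvc : 0 ≤ (b - k 0) / c := div_nonneg (by linarith) hc0.le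
    set T : ℝ := (b - k 0) / c + 1 with hTdef
    have hT0 : 0 ≤ T := by rw [hTdef]; linarith
    have hkey := (convex_Ici (0:ℝ)).mul_sub_le_image_sub_of_le_deriv hcontk hdiff
      (C := c) (by
        intro x hx
        rw [hderiv_eq x hx]
        rw [interior_Ici] at hx
        exact hge x (le_of_lt hx)) 0 Set.self_mem_Ici T hT0 hT0
    have hcT : c * T = (b - k 0) + c := by
      rw [hTdef]; field_simp
    have hbk : k 0 ≤ b := hk0b.le
    nlinarith [hbub T hT0]
  -- Step 2: the derivative tends to L
  have heps : Tendsto (fun t => exp (-exp (k t))) atTop (nhdsWithin 0 (Ioi 0)) := by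
    apply tendsto_nhdsWithin_of_tendsto_nhds_of_eventually_within
    · exact tendsto_exp_atBot.comp ((tendsto_neg_atBot_iff.2 (tendsto_exp_atTop.comp hk_top)))
    · exact Eventually.of_forall (fun t => exp_pos _)
  have hderiv_lim : Tendsto (fun t => hbar (exp (-exp (k t)))) atTop (nhds L) :=
    hbar_lim.comp heps
  -- Step 3: k t / t tends to L
  have hmain : Tendsto (fun t => k t / t) atTop (nhds L) := by
    rw [Metric.tendsto_atTop]
    intro ε hε
    obtain ⟨T₀, hT₀⟩ := (Metric.tendsto_atTop.1 hderiv_lim) (ε/3) (by positivity)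
    set T : ℝ := max T₀ 0
    have hT0 : (0:ℝ) ≤ T := le_max_right _ _
    -- MVT bound on [T, ∞)
    have hbound : ∀ t ≥ T, |k t - k T - L * (t - T)| ≤ ε/3 * (t - T) := by
      intro t ht
      have h1 : ∀ x ∈ Ici T, HasDerivWithinAt (fun s => k s - L * s)
          (hbar (exp (-exp (k x))) - L) (Ici T) x := by
        intro x hx
        have hx0 : (0:ℝ) ≤ x := le_trans hT0 hx
        exact (((hk_deriv x hx0).sub (by
          simpa using (hasDerivAt_id x).const_mul L))).hasDerivWithinAt
      have h2 : ∀ x ∈ Ici T, ‖hbar (exp (-exp (k x))) - L‖ ≤ ε/3 := by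
        intro x hx
        have := hT₀ x (le_trans (le_max_left _ _) hx)
        rw [Real.dist_eq] at this
        exact le_of_lt this
      have := (convex_Ici T).norm_image_sub_le_of_norm_hasDerivWithin_le h1 h2
        Set.self_mem_Ici ht
      have habs : ‖t - T‖ = t - T := by
        rw [Real.norm_eq_abs, abs_of_nonneg (by linarith)]
      rw [Real.norm_eq_abs] at this
      rw [habs] at this
      calc |k t - k T - L * (t - T)| = |(k t - L * t) - (k T - L * T)| := by ring_nf
        _ ≤ ε/3 * (t - T) := this
    set M : ℝ := |k T - L * T|
    refine ⟨max (max T 1) (3 * M / ε), fun t ht => ?_⟩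
    have ht1 : (1:ℝ) ≤ t := le_trans (le_trans (le_max_right T 1) (le_max_left _ _)) ht
    have htT : T ≤ t := le_trans (le_trans (le_max_left T 1) (le_max_left _ _)) ht
    have htM : 3 * M / ε ≤ t := le_trans (le_max_right _ _) ht
    have ht0 : (0:ℝ) < t := by linarith
    have hMle : M ≤ ε/3 * t := by
      rw [div_le_iff₀ hε] at htM
      calc M = 3 * M / 3 := by ring
        _ ≤ t * ε / 3 := by linarith
        _ = ε/3 * t := by ring
    have hb := hbound t htT
    rw [Real.dist_eq]
    have heq : k t / t - L = (k t - L * t) / t := by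
      field_simp
    rw [heq, abs_div, abs_of_pos ht0]
    have h3 : |k t - L * t| ≤ |k t - k T - L * (t - T)| + M := by
      have : k t - L * t = (k t - k T - L * (t - T)) + (k T - L * T) := by ring
      rw [this]
      exact abs_add_le _ _
    have h4 : |k t - L * t| ≤ ε/3 * (t - T) + ε/3 * t := by
      calc |k t - L * t| ≤ |k t - k T - L * (t - T)| + M := h3
        _ ≤ ε/3 * (t - T) + ε/3 * t := by linarith
    rw [div_lt_iff₀ ht0]
    nlinarith [abs_nonneg (k t - L * t)]
  refine ⟨hmain, ?_⟩
  have : (fun t => log (-log (exp (-exp (k t)))) / t) = fun t => k t / t := by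
    funext t
    rw [Real.log_exp, neg_neg, Real.log_exp]
  rw [this]
  exact hmain
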